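/- Fix constants N ≥ 1, K ≥ 1, α = 3/2, β = 1/2. Define sequences L_{k+1} = ⌊L_k^α⌋ + 1 and m_{L_{k+1}} = m_{L_k} − (96NK/L_k^{α−1})·m_{L_k} − 3/L_k^{α(1−β)}, with initial data m_{L_0} = 1/(3 L_0^{(1−β)/2}). Then for L_0 sufficiently large (depending on N, K): (a) m_{L_k} > 48NK / L_k^{1−β} for all k ≥ 0; (b) the total decrement S = Σ_{j≥0}(m_{L_j} − m_{L_{j+1}}) satisfies S ≤ m_{L_0}/2; consequently m_{L_k} ≥ m_{L_0}/2 > 0 for all k. -/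

import Mathlib

private lemma pow_two_rpow (y : ℝ) (hy : 0 ≤ y) (p : ℝ) :
    ((y ^ (2:ℕ)) : ℝ) ^ p = y ^ (2 * p) := by
  rw [← Real.rpow_natCast y 2, ← Real.rpow_mul hy]
  norm_num

private lemma rpow_pow_helper (x : ℝ) (hx : 0 ≤ x) (p : ℝ) (n : ℕ) :
    (x ^ p) ^ n = x ^ (p * n) := by
  rw [← Real.rpow_natCast (x ^ p) n, ← Real.rpow_mul hx]

set_option maxHeartbeats 1000000 in
/-- With `α = 3/2`, `β = 1/2`, length scales `L_{k+1} = ⌊L_k^α⌋ + 1`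
and masses `m_{k+1} = m_k − (96NK/L_k^{α−1})·m_k − 3/L_k^{α(1−β)}`, initial mass
`m_0 = 1/(3 L_0^{(1−β)/2})`: for `L_0` large (depending on `N, K`):
(a) `m_k > 48NK/L_k^{1−β}` for all `k`;
(b) the total decrement `S = Σ_j (m_j − m_{j+1})` satisfies `S ≤ m_0/2`;
consequently `m_k ≥ m_0/2 > 0` for all `k`.
(Here `α−1 = 1/2`, `α(1−β) = 3/4`, `(1−β)/2 = 1/4`, `1−β = 1/2`.) -/
theorem stmt11 (N K : ℕ) (hN : 1 ≤ N) (hK : 1 ≤ K) :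
    ∃ L0star : ℕ, ∀ L0 : ℕ, L0star ≤ L0 →
      ∀ (L : ℕ → ℕ) (m : ℕ → ℝ),
        L 0 = L0 →
        (∀ k, L (k + 1) = ⌊(L k : ℝ) ^ ((3 : ℝ) / 2)⌋₊ + 1) →
        m 0 = 1 / (3 * (L0 : ℝ) ^ ((1 : ℝ) / 4)) →
        (∀ k, m (k + 1)
          = m k - ((96 * (N : ℝ) * K) / (L k : ℝ) ^ ((1 : ℝ) / 2)) * m k
              - 3 / (L k : ℝ) ^ ((3 : ℝ) / 4)) →
        (∀ k, (48 * (N : ℝ) * K) / (L k : ℝ) ^ ((1 : ℝ) / 2) < m k) ∧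
        (∑' j : ℕ, (m j - m (j + 1))) ≤ m 0 / 2 ∧
        (∀ k, m 0 / 2 ≤ m k) ∧ 0 < m 0 / 2 := by
  refine ⟨(1536 * N * K) ^ 4, ?_⟩
  intro L0 hL0 L m hL0eq hLrec hm0 hmrec
  obtain ⟨t, ht⟩ : ∃ t : ℝ, t = (N : ℝ) * K := ⟨_, rfl⟩
  have htone : (1:ℝ) ≤ t := by
    have h1 : (1:ℕ) * 1 ≤ N * K := Nat.mul_le_mul hN hK
    rw [ht]; exact_mod_cast h1
  have hL0R : ((1536 * t) ^ 4 : ℝ) ≤ (L0 : ℝ) := by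
    have h2 : (((1536 * N * K) ^ 4 : ℕ) : ℝ) ≤ (L0 : ℝ) := by exact_mod_cast hL0
    calc ((1536 * t) ^ 4 : ℝ) = (((1536 * N * K) ^ 4 : ℕ) : ℝ) := by rw [ht]; push_cast; ring
      _ ≤ _ := h2
  have hL0pos : (0:ℝ) < (L0 : ℝ) := by
    have h1 : (1:ℝ) ≤ 1536 * t := by linarith
    nlinarith [pow_le_pow_left₀ (by norm_num : (0:ℝ) ≤ 1) h1 4]
  obtain ⟨A, hA⟩ : ∃ A : ℝ, A = (L0:ℝ) ^ ((1:ℝ)/4) := ⟨_, rfl⟩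
  have hApos : 0 < A := hA ▸ Real.rpow_pos_of_pos hL0pos _
  have hAge : 1536 * t ≤ A := by
    rw [hA]
    calc (1536*t : ℝ) = ((1536*t)^(4:ℕ))^(((4:ℕ):ℝ)⁻¹) :=
          (Real.pow_rpow_inv_natCast (by positivity) (by norm_num)).symm
      _ = ((1536*t)^(4:ℕ))^((1:ℝ)/4) := by norm_num
      _ ≤ (L0:ℝ)^((1:ℝ)/4) := by
          apply Real.rpow_le_rpow (by positivity) _ (by norm_num)
          exact_mod_cast hL0R
  have hA2 : A ^ (2:ℕ) = (L0:ℝ) ^ ((1:ℝ)/2) := by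
    rw [hA, rpow_pow_helper _ hL0pos.le]; norm_num
  have hA3 : A ^ (3:ℕ) = (L0:ℝ) ^ ((3:ℝ)/4) := by
    rw [hA, rpow_pow_helper _ hL0pos.le]; norm_num
  have hL0big : (16:ℝ) ≤ (L0:ℝ) := by
    have h1 : (2:ℝ) ≤ 1536 * t := by linarith
    nlinarith [pow_le_pow_left₀ (by norm_num : (0:ℝ) ≤ 2) h1 4]
  -- growth of L
  have hgrow : ∀ j, (4:ℝ)^j * (L0:ℝ) ≤ (L j : ℝ) := by
    intro j
    induction j with
    | zero => simp [hL0eq]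
    | succ j ihj =>
      have hLjpos : (0:ℝ) < (L j : ℝ) := lt_of_lt_of_le (by positivity) ihj
      have h16 : (16:ℝ) ≤ (L j : ℝ) := by
        refine le_trans ?_ ihj
        nlinarith [one_le_pow₀ (by norm_num : (1:ℝ) ≤ 4) (n := j), hL0big]
      have hsqrt : (4:ℝ) ≤ (L j:ℝ)^((1:ℝ)/2) := by
        have h := Real.rpow_le_rpow (by norm_num : (0:ℝ) ≤ 16) h16 (by norm_num : (0:ℝ) ≤ 1/2)
        rw [show (16:ℝ) = 4 ^ (2:ℕ) by norm_num, pow_two_rpow 4 (by norm_num)] at h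
        norm_num at h
        exact h
      have hstep : (L j:ℝ)^((3:ℝ)/2) < (L (j+1) : ℝ) := by
        rw [hLrec j]
        push_cast
        exact Nat.lt_floor_add_one _
      have hdecomp : (L j:ℝ)^((3:ℝ)/2) = (L j:ℝ) * (L j:ℝ)^((1:ℝ)/2) := by
        rw [show (3:ℝ)/2 = 1 + 1/2 by norm_num, Real.rpow_add hLjpos, Real.rpow_one]
      calc (4:ℝ)^(j+1) * L0 = 4 * ((4:ℝ)^j * L0) := by ring
        _ ≤ 4 * (L j : ℝ) := by linarith
        _ ≤ (L j : ℝ) * (L j:ℝ)^((1:ℝ)/2) := by nlinarith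
        _ = (L j:ℝ)^((3:ℝ)/2) := hdecomp.symm
        _ ≤ (L (j+1) : ℝ) := hstep.le
  have hLpos : ∀ j, (0:ℝ) < (L j : ℝ) := fun j => lt_of_lt_of_le (by positivity) (hgrow j)
  -- rpow lower bounds
  have hbound2 : ∀ j, (2:ℝ)^j * A^(2:ℕ) ≤ (L j:ℝ)^((1:ℝ)/2) := by
    intro j
    have h := Real.rpow_le_rpow (by positivity) (hgrow j) (by norm_num : (0:ℝ) ≤ 1/2)
    rw [Real.mul_rpow (by positivity) hL0pos.le,
      show (4:ℝ)^j = ((2:ℝ)^j)^(2:ℕ) by rw [← pow_mul, pow_mul']; norm_num,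
      pow_two_rpow _ (by positivity)] at h
    norm_num at h
    rw [hA2]; exact h
  have hbound3 : ∀ j, (2:ℝ)^j * A^(3:ℕ) ≤ (L j:ℝ)^((3:ℝ)/4) := by
    intro j
    have h := Real.rpow_le_rpow (by positivity) (hgrow j) (by norm_num : (0:ℝ) ≤ 3/4)
    rw [Real.mul_rpow (by positivity) hL0pos.le,
      show (4:ℝ)^j = ((2:ℝ)^j)^(2:ℕ) by rw [← pow_mul, pow_mul']; norm_num,
      pow_two_rpow _ (by positivity)] at h
    have h2 : (2:ℝ)^j ≤ ((2:ℝ)^j) ^ (2 * ((3:ℝ)/4)) := by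
      nth_rewrite 1 [← Real.rpow_one ((2:ℝ)^j)]
      exact Real.rpow_le_rpow_of_exponent_le (one_le_pow₀ (by norm_num)) (by norm_num)
    rw [hA3]
    calc (2:ℝ)^j * (L0:ℝ)^((3:ℝ)/4) ≤ ((2:ℝ)^j)^(2*((3:ℝ)/4)) * (L0:ℝ)^((3:ℝ)/4) := by
          have : (0:ℝ) ≤ (L0:ℝ)^((3:ℝ)/4) := by positivity
          nlinarith
      _ ≤ (L j:ℝ)^((3:ℝ)/4) := h
  have hm0A : m 0 = 1 / (3 * A) := by rw [hm0, hA]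
  have hm0pos : 0 < m 0 := by rw [hm0A]; positivity
  -- telescoping
  have mtel : ∀ n, m 0 - ∑ j ∈ Finset.range n, (m j - m (j+1)) = m n := by
    intro n; rw [Finset.sum_range_sub' m n]; ring
  obtain ⟨C, hC⟩ : ∃ C : ℝ, C = 96 * t * m 0 / A ^ (2:ℕ) + 3 / A ^ (3:ℕ) := ⟨_, rfl⟩
  have hCnn : 0 ≤ C := by rw [hC]; positivity
  have hkey : 384 * t + 36 ≤ A ^ (2:ℕ) := by nlinarith [hAge, htone]
  have hCsmall : 2 * C ≤ m 0 / 2 := by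
    rw [hC, hm0A]
    have h1 : 2*(96*t*(1/(3*A))/A^(2:ℕ) + 3/A^(3:ℕ)) = (64*t+6)/A^(3:ℕ) := by
      field_simp; ring
    have h2 : (1/(3*A))/2 = (A^(2:ℕ))/(6*A^(3:ℕ)) := by
      field_simp; ring
    rw [h1, h2, div_le_div_iff₀ (by positivity) (by positivity)]
    nlinarith [mul_le_mul_of_nonneg_right hkey (pow_pos hApos 3).le]
  -- main induction
  have main : ∀ k, m 0 / 2 ≤ m k ∧ m k ≤ m 0 := by
    intro k
    induction k using Nat.strong_induction_on with
    | _ k ih =>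
      have hterm : ∀ j ∈ Finset.range k, 0 ≤ m j - m (j+1) ∧
          m j - m (j+1) ≤ (1/2:ℝ)^j * C := by
        intro j hj
        obtain ⟨hlow, hup⟩ := ih j (Finset.mem_range.mp hj)
        have hmjnn : 0 ≤ m j := le_trans (by linarith) hlow
        have hd : m j - m (j+1)
            = (96*t/(L j:ℝ)^((1:ℝ)/2)) * m j + 3/(L j:ℝ)^((3:ℝ)/4) := by
          rw [hmrec j, ht]; ring
        have hp2 : (0:ℝ) < (L j:ℝ)^((1:ℝ)/2) := Real.rpow_pos_of_pos (hLpos j) _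
        have hp3 : (0:ℝ) < (L j:ℝ)^((3:ℝ)/4) := Real.rpow_pos_of_pos (hLpos j) _
        constructor
        · rw [hd]; positivity
        · rw [hd]
          have e1 : (96*t/(L j:ℝ)^((1:ℝ)/2)) * m j ≤ 96*t*m 0 / ((2:ℝ)^j * A^(2:ℕ)) := by
            rw [div_mul_eq_mul_div]
            apply div_le_div₀ (by positivity) (by nlinarith) (by positivity) (hbound2 j)
          have e2 : 3/(L j:ℝ)^((3:ℝ)/4) ≤ 3 / ((2:ℝ)^j * A^(3:ℕ)) := by
            apply div_le_div₀ (by norm_num) (le_refl _) (by positivity) (hbound3 j)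
          have e3 : 96*t*m 0 / ((2:ℝ)^j * A^(2:ℕ)) + 3 / ((2:ℝ)^j * A^(3:ℕ))
              = (1/2:ℝ)^j * C := by
            rw [hC, one_div_pow]
            field_simp
          linarith
      have hsnn : 0 ≤ ∑ j ∈ Finset.range k, (m j - m (j+1)) :=
        Finset.sum_nonneg (fun j hj => (hterm j hj).1)
      have hsle : ∑ j ∈ Finset.range k, (m j - m (j+1)) ≤ m 0 / 2 := by
        calc ∑ j ∈ Finset.range k, (m j - m (j+1))
            ≤ ∑ j ∈ Finset.range k, (1/2:ℝ)^j * C :=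
              Finset.sum_le_sum (fun j hj => (hterm j hj).2)
          _ = (∑ j ∈ Finset.range k, (1/2:ℝ)^j) * C := by rw [Finset.sum_mul]
          _ ≤ 2 * C := by
              have := sum_geometric_two_le k
              nlinarith
          _ ≤ m 0 / 2 := hCsmall
      have := mtel k
      constructor <;> linarith
  refine ⟨?_, ?_, fun k => (main k).1, by linarith⟩
  · -- part (a)
    intro k
    have hb2 := hbound2 k
    have hp2 : (0:ℝ) < (L k:ℝ)^((1:ℝ)/2) := Real.rpow_pos_of_pos (hLpos k) _
    have hLk : 1536*t*A ≤ (L k:ℝ)^((1:ℝ)/2) := by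
      have h1 : 1536*t*A ≤ A^(2:ℕ) := by nlinarith
      have h2' : A^(2:ℕ) ≤ (2:ℝ)^k * A^(2:ℕ) := by
        nlinarith [one_le_pow₀ (by norm_num : (1:ℝ) ≤ 2) (n := k), sq_nonneg A]
      linarith
    have e1 : 48 * (N:ℝ) * K / (L k:ℝ)^((1:ℝ)/2) ≤ 48*t/(1536*t*A) := by
      rw [show 48 * (N:ℝ) * K = 48*t by rw [ht]; ring]
      apply div_le_div₀ (by positivity) (le_refl _) (by positivity) hLk
    have e2 : 48*t/(1536*t*A) = 1/(32*A) := by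
      rw [div_eq_div_iff (by positivity) (by positivity)]
      ring
    have e3 : 1/(32*A) < 1/(6*A) := by
      apply div_lt_div_of_pos_left one_pos (by positivity)
      nlinarith
    have e4 : (1:ℝ)/(6*A) = m 0 / 2 := by rw [hm0A]; ring
    calc 48 * (N:ℝ) * K / (L k:ℝ)^((1:ℝ)/2) ≤ 1/(32*A) := by rw [← e2]; exact e1
      _ < 1/(6*A) := e3
      _ = m 0/2 := e4
      _ ≤ m k := (main k).1
  · -- tsum bound
    apply Real.tsum_le_of_sum_range_le
    · intro n
      have h1 := (main n).1
      have hd : m n - m (n+1)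
          = (96*t/(L n:ℝ)^((1:ℝ)/2)) * m n + 3/(L n:ℝ)^((3:ℝ)/4) := by
        rw [hmrec n, ht]; ring
      have hp2 : (0:ℝ) < (L n:ℝ)^((1:ℝ)/2) := Real.rpow_pos_of_pos (hLpos n) _
      have hp3 : (0:ℝ) < (L n:ℝ)^((3:ℝ)/4) := Real.rpow_pos_of_pos (hLpos n) _
      have hmnn : 0 ≤ m n := le_trans (by linarith) h1
      rw [hd]; positivity
    · intro n
      have h1 := (main n).1
      have := mtel n
      linarith
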